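/- Let N ≥ 2, let -1 ≤ τ_1 < τ_2 < … < τ_N = 1 be distinct points, let ω_N > 0, and let M be an N×N real matrix with the Radau costate differentiation property. Then M is invertible and its inverse is given explicitly by: M^{-1}_{ij} = ω_N M_j(1) + ∫_{1}^{τ_i} M_j(τ) dτ for 1 ≤ i < N and 1 ≤ j < N; M^{-1}_{iN} = −ω_N for 1 ≤ i ≤ N; and M^{-1}_{Nj} = ω_N M_j(1) for 1 ≤ j < N, where M_j(τ) = Π_{i≠j, 1≤i≤N−1} (τ − τ_i)/(τ_j − τ_i) is the Lagrange interpolating basis relative to the point set τ_1, …, τ_{N−1}. -/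

import Mathlib

open Polynomial Matrix

noncomputable section

def pint (p : Polynomial ℝ) : Polynomial ℝ :=
  p.sum fun n a => C (a / (n + 1)) * X ^ (n + 1)

lemma derivative_pint (p : Polynomial ℝ) : derivative (pint p) = p := by
  unfold pint
  rw [Polynomial.sum, map_sum]
  conv_rhs => rw [← p.sum_C_mul_X_pow_eq]
  rw [Polynomial.sum]
  refine Finset.sum_congr rfl fun n hn => ?_
  rw [derivative_C_mul, derivative_X_pow]
  have h : ((n : ℝ) + 1) ≠ 0 := by positivity
  rw [Nat.add_sub_cancel, ← mul_assoc, ← C_mul]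
  push_cast
  rw [div_mul_cancel₀ _ h]

lemma natDegree_pint_le (p : Polynomial ℝ) : (pint p).natDegree ≤ p.natDegree + 1 := by
  unfold pint
  rw [Polynomial.sum]
  refine Polynomial.natDegree_sum_le_of_forall_le _ _ fun n hn => ?_
  refine (natDegree_C_mul_le _ _).trans ?_
  simpa using Nat.add_le_add_right (Polynomial.le_natDegree_of_mem_supp n hn) 1

lemma integral_eval_pint (p : Polynomial ℝ) (a b : ℝ) :
    (∫ t in a..b, p.eval t) = (pint p).eval b - (pint p).eval a := by
  have h1 : ∀ x ∈ Set.uIcc a b, HasDerivAt (fun y => (pint p).eval y) (p.eval x) x := by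
    intro x _
    simpa [derivative_pint] using (pint p).hasDerivAt x
  have h2 : IntervalIntegrable (fun t => p.eval t) MeasureTheory.volume a b :=
    p.continuous.intervalIntegrable _ _
  exact intervalIntegral.integral_eq_sub_of_hasDerivAt h1 h2

/-- The Lagrange interpolating basis polynomial `M_j` relative to the point
set `τ_1, …, τ_{N-1}` (the first `N-1` of the `N` points `τ`). -/
def subBasis (N : ℕ) (τ : Fin N → ℝ) (j : Fin (N - 1)) : Polynomial ℝ :=
  Lagrange.basis Finset.univ (fun k : Fin (N - 1) => τ (Fin.castLE (Nat.sub_le N 1) k)) j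

/-- Let `N ≥ 2`, `-1 ≤ τ_1 < … < τ_N = 1`, `ω_N > 0`, and let
`M` be an `N×N` matrix with the Radau costate differentiation property:
`(Mp)_i = ṗ(τ_i)` for `i < N` and `(Mp)_N = ṗ(1) − p(1)/ω_N` for every
polynomial `p` of degree at most `N-1`.  Then `M` is invertible with
`M⁻¹_{ij} = ω_N M_j(1) + ∫_1^{τ_i} M_j` for `i, j < N`, `M⁻¹_{iN} = −ω_N`, and
`M⁻¹_{Nj} = ω_N M_j(1)` for `j < N`, where `M_j` is the Lagrange basis for
`τ_1, …, τ_{N-1}`. -/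
theorem radau_costate_explicit_inverse
    (N : ℕ) (hN : 2 ≤ N) (τ : Fin N → ℝ) (ωN : ℝ)
    (hmono : StrictMono τ)
    (hge : ∀ i, -1 ≤ τ i)
    (hlast : τ ⟨N - 1, by omega⟩ = 1)
    (hωN : 0 < ωN)
    (M : Matrix (Fin N) (Fin N) ℝ)
    (hM : ∀ p : Polynomial ℝ, p.degree ≤ (N - 1 : ℕ) →
      (∀ i : Fin N, (i : ℕ) < N - 1 →
        M.mulVec (fun j => p.eval (τ j)) i = (derivative p).eval (τ i)) ∧
      M.mulVec (fun j => p.eval (τ j)) ⟨N - 1, by omega⟩ =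
        (derivative p).eval 1 - p.eval 1 / ωN) :
    ∃ Minv : Matrix (Fin N) (Fin N) ℝ,
      M * Minv = 1 ∧ Minv * M = 1 ∧
      (∀ (i j : Fin N), (i : ℕ) < N - 1 → ∀ hj : (j : ℕ) < N - 1,
        Minv i j = ωN * (subBasis N τ ⟨j, hj⟩).eval 1 +
          ∫ t in (1:ℝ)..(τ i), (subBasis N τ ⟨j, hj⟩).eval t) ∧
      (∀ i : Fin N, Minv i ⟨N - 1, by omega⟩ = -ωN) ∧
      (∀ (j : Fin N), ∀ hj : (j : ℕ) < N - 1,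
        Minv ⟨N - 1, by omega⟩ j = ωN * (subBasis N τ ⟨j, hj⟩).eval 1) := by
  set L : Fin N := ⟨N - 1, by omega⟩ with hL
  set v : Fin (N - 1) → ℝ := fun k => τ (Fin.castLE (Nat.sub_le N 1) k) with hv
  have hvinj : Set.InjOn v (Finset.univ : Finset (Fin (N - 1))) := by
    intro a _ b _ hab
    exact Fin.castLE_injective _ (hmono.injective hab)
  have hdegB : ∀ j : Fin (N - 1), (subBasis N τ j).natDegree = N - 2 := by
    intro j
    have := Lagrange.natDegree_basis hvinj (Finset.mem_univ j)
    simpa [subBasis, Nat.sub_sub] using this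
  -- the inverse matrix
  set Minv : Matrix (Fin N) (Fin N) ℝ := fun i j =>
    if hj : (j : ℕ) < N - 1 then
      ωN * (subBasis N τ ⟨j, hj⟩).eval 1 +
        ∫ t in (1:ℝ)..(τ i), (subBasis N τ ⟨j, hj⟩).eval t
    else -ωN with hMinv
  have key : M * Minv = 1 := by
    ext i j
    have hmm : (M * Minv) i j = M.mulVec (fun k => Minv k j) i := rfl
    by_cases hj : (j : ℕ) < N - 1
    · -- column j is the evaluation of polynomial q
      set p : Polynomial ℝ := subBasis N τ ⟨j, hj⟩ with hp
      set q : Polynomial ℝ := C (ωN * p.eval 1) + (pint p - C ((pint p).eval 1)) with hq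
      have hqev : ∀ x : ℝ, q.eval x = ωN * p.eval 1 + ∫ t in (1:ℝ)..x, p.eval t := by
        intro x
        rw [integral_eval_pint]
        simp [hq]
      have hcol : (fun k => Minv k j) = fun k => q.eval (τ k) := by
        funext k
        rw [hqev, hMinv]
        simp [hj, hp]
      have hqdeg : q.degree ≤ (N - 1 : ℕ) := by
        rw [← Polynomial.natDegree_le_iff_degree_le]
        refine (Polynomial.natDegree_add_le _ _).trans ?_
        simp only [Polynomial.natDegree_C, max_le_iff]
        constructor
        · omega
        refine (Polynomial.natDegree_sub_le _ _).trans ?_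
        simp only [Polynomial.natDegree_C, max_le_iff]
        refine ⟨(natDegree_pint_le p).trans ?_, by omega⟩
        rw [hdegB]; omega
      have hqd : derivative q = p := by
        rw [hq]
        simp [derivative_pint]
      obtain ⟨h1, h2⟩ := hM q hqdeg
      rcases lt_or_ge (i : ℕ) (N - 1) with hi | hi
      · rw [hmm, hcol, h1 i hi, hqd]
        have hone : (1 : Matrix (Fin N) (Fin N) ℝ) i j = if i = j then 1 else 0 :=
          Matrix.one_apply
        rcases eq_or_ne i j with rfl | hne
        · rw [hone, if_pos rfl, hp]
          have : τ i = v ⟨i, hi⟩ := by simp [hv]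
          rw [this, subBasis]
          exact Lagrange.eval_basis_self hvinj (Finset.mem_univ _)
        · rw [hone, if_neg hne, hp]
          have : τ i = v ⟨i, hi⟩ := by simp [hv]
          rw [this, subBasis]
          refine Lagrange.eval_basis_of_ne ?_ (Finset.mem_univ _)
          intro h
          apply hne
          apply Fin.ext
          simpa using congrArg Fin.val h.symm
      · have hiL : i = L := by
          apply Fin.ext
          simp only [hL]
          omega
        subst hiL
        rw [hmm, hcol, h2, hqd, hqev]
        rw [intervalIntegral.integral_same]
        have hjL : L ≠ j := by
          intro h
          rw [← h] at hj
          simp [hL] at hj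
        rw [Matrix.one_apply, if_neg hjL]
        field_simp
        ring
    · -- j is the last column; column is constant -ωN
      have hjL : j = L := by
        apply Fin.ext
        simp only [hL]
        omega
      subst hjL
      have hcol : (fun k => Minv k L) = fun k => (C (-ωN) : Polynomial ℝ).eval (τ k) := by
        funext k
        rw [hMinv]
        simp [hj]
      have hdeg : (C (-ωN) : Polynomial ℝ).degree ≤ (N - 1 : ℕ) := by
        refine (Polynomial.degree_C_le).trans ?_
        exact_mod_cast Nat.cast_nonneg' _
      obtain ⟨h1, h2⟩ := hM (C (-ωN)) hdeg
      rcases lt_or_ge (i : ℕ) (N - 1) with hi | hi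
      · rw [hmm, hcol, h1 i hi]
        have hne : i ≠ L := by
          intro h
          rw [h] at hi
          simp [hL] at hi
        rw [Matrix.one_apply, if_neg hne]
        simp
      · have hiL : i = L := by
          apply Fin.ext
          simp only [hL]
          omega
        subst hiL
        rw [hmm, hcol, h2]
        rw [Matrix.one_apply, if_pos rfl]
        simp
        field_simp
  refine ⟨Minv, key, mul_eq_one_comm.mp key, ?_, ?_, ?_⟩
  · intro i j hi hj
    rw [hMinv]
    simp [hj]
  · intro i
    rw [hMinv]
    simp [hL]
  · intro j hj
    rw [hMinv]
    simp only [hj, dif_pos]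
    rw [show τ L = 1 from hlast, intervalIntegral.integral_same]
    ring
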